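/- If (x, y, z) are positive integers with x^2 + (2k-1)^y = k^z, 4 | k, 2k-1 an odd prime power, y odd and z odd with z > y, then writing y = 6A + i with i ∈ {3, 5} and z = 3B + j with 0 ≤ j ≤ 2, the point (U, V) = (k^{B+j}/(2k-1)^{2A}, x·k^j/(2k-1)^{3A}) satisfies V^2 = U^3 - (2k-1)^i·k^{2j}. -/

import Mathlib

theorem stmt_19 (k x y z A B i j : ℕ) (hk : 0 < k) (h4 : 4 ∣ k)
    (hpp : ∃ p m : ℕ, p.Prime ∧ Odd p ∧ 0 < m ∧ 2 * k - 1 = p ^ m)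
    (hx : 0 < x) (hy : 0 < y) (hz : 0 < z)
    (hyo : Odd y) (hzo : Odd z) (hzy : z > y)
    (heq : x ^ 2 + (2 * k - 1) ^ y = k ^ z)
    (hi : i = 3 ∨ i = 5) (hyA : y = 6 * A + i)
    (hj : j ≤ 2) (hzB : z = 3 * B + j) :
    ((x : ℚ) * (k : ℚ) ^ j / ((2 * k - 1 : ℕ) : ℚ) ^ (3 * A)) ^ 2 =
      ((k : ℚ) ^ (B + j) / ((2 * k - 1 : ℕ) : ℚ) ^ (2 * A)) ^ 3 -
        ((2 * k - 1 : ℕ) : ℚ) ^ i * (k : ℚ) ^ (2 * j) := by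
  have hk1 : 1 ≤ 2 * k := by omega
  have hcast : ((2 * k - 1 : ℕ) : ℚ) = 2 * (k : ℚ) - 1 := by
    push_cast [Nat.cast_sub hk1]; ring
  have hq2 : (2 * (k : ℚ) - 1) ≠ 0 := by
    rw [← hcast]
    exact_mod_cast (Nat.cast_ne_zero (R := ℚ)).2 (by omega)
  have heqQ : (x : ℚ) ^ 2 + ((2 * k - 1 : ℕ) : ℚ) ^ y = (k : ℚ) ^ z := by
    exact_mod_cast congrArg (fun n : ℕ => (n : ℚ)) heq
  rw [hcast] at heqQ
  subst hyA hzB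
  have heqQ' : (x : ℚ) ^ 2 =
      ((k : ℚ) ^ B) ^ 3 * (k : ℚ) ^ j
        - ((2 * (k : ℚ) - 1) ^ A) ^ 6 * (2 * (k : ℚ) - 1) ^ i := by
    rw [show (6 * A + i) = A * 6 + i by ring, pow_add, pow_mul,
      show (3 * B + j) = B * 3 + j by ring, pow_add, pow_mul] at heqQ
    linarith [heqQ]
  rw [hcast, show 3 * A = A * 3 from mul_comm _ _, show 2 * A = A * 2 from mul_comm _ _,
    show 2 * j = j * 2 from mul_comm _ _, pow_mul, pow_mul, pow_mul, pow_add]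
  have hqA : ((2 * (k : ℚ) - 1) ^ A) ≠ 0 := pow_ne_zero _ hq2
  field_simp
  linear_combination heqQ'
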